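/- Let q > 0, q ≠ 1, and let R_q = 2/(1-q) if 0 < q < 1 and R_q = 2q/(q-1) if q > 1. Then for every complex number z with |z| < R_q, the three series below converge and e_q(z/2) · E_q(z/2) = ∑_{n=0}^∞ z^n/{n}_q!, where e_q(w) = ∑_{n=0}^∞ w^n/[n]_q!, E_q(w) = ∑_{n=0}^∞ q^{n(n-1)/2} w^n/[n]_q!, and {n}_q! is the factorial of the symbols {n}_q = 2(1-q^n)/((1-q)(1+q^{n-1})). -/

import Mathlib

/-- The q-integer `[k]_q = 1 + q + q^2 + ⋯ + q^(k-1)`. -/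
noncomputable def qInt (q : ℝ) (k : ℕ) : ℝ := ∑ i ∈ Finset.range k, q ^ i

/-- The q-factorial `[n]_q! = [1]_q [2]_q ⋯ [n]_q`, with `[0]_q! = 1`. -/
noncomputable def qFact (q : ℝ) (n : ℕ) : ℝ := ∏ k ∈ Finset.range n, qInt q (k + 1)

/-- The symbol `{n}_q = 2(1-q^n)/((1-q)(1+q^(n-1)))` (for `n ≥ 1`). -/
noncomputable def qBrace (q : ℝ) (n : ℕ) : ℝ :=
  2 * (1 - q ^ n) / ((1 - q) * (1 + q ^ (n - 1)))

/-- The factorial `{n}_q! = {1}_q {2}_q ⋯ {n}_q`, with `{0}_q! = 1`. -/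
noncomputable def qBraceFact (q : ℝ) (n : ℕ) : ℝ := ∏ k ∈ Finset.range n, qBrace q (k + 1)

/-- The radius `R_q = 2/(1-q)` for `0 < q < 1` and `R_q = 2q/(q-1)` for `q > 1`. -/
noncomputable def Rq (q : ℝ) : ℝ := if q < 1 then 2 / (1 - q) else 2 * q / (q - 1)

open Finset Filter Topology

lemma qInt_pos {q : ℝ} (hq : 0 < q) (k : ℕ) : 0 < qInt q (k + 1) :=
  Finset.sum_pos (fun i _ => pow_pos hq i) nonempty_range_add_one

lemma qFact_pos {q : ℝ} (hq : 0 < q) (n : ℕ) : 0 < qFact q n :=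
  Finset.prod_pos fun k _ => qInt_pos hq k

lemma qFact_succ (q : ℝ) (n : ℕ) : qFact q (n + 1) = qFact q n * qInt q (n + 1) :=
  Finset.prod_range_succ _ _

lemma qInt_add (q : ℝ) (a b : ℕ) : qInt q (a + b) = qInt q a + q ^ a * qInt q b := by
  unfold qInt
  rw [Finset.sum_range_add, Finset.mul_sum]
  simp [pow_add]

lemma qInt_eq {q : ℝ} (hq1 : q ≠ 1) (k : ℕ) : qInt q k = (q ^ k - 1) / (q - 1) :=
  geom_sum_eq hq1 k

lemma qBrace_succ {q : ℝ} (hq : 0 < q) (hq1 : q ≠ 1) (n : ℕ) :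
    qBrace q (n + 1) = 2 * qInt q (n + 1) / (1 + q ^ n) := by
  have h1 : q - 1 ≠ 0 := sub_ne_zero.mpr hq1
  have h2 : (1 : ℝ) + q ^ n ≠ 0 := by positivity
  have h3 : (1 : ℝ) - q ≠ 0 := fun h => h1 (by linarith [sub_eq_zero.mp h])
  rw [qInt_eq hq1, qBrace]
  simp only [Nat.add_sub_cancel]
  field_simp
  ring

lemma qBrace_pos {q : ℝ} (hq : 0 < q) (hq1 : q ≠ 1) (n : ℕ) : 0 < qBrace q (n + 1) := by
  rw [qBrace_succ hq hq1]
  have := qInt_pos hq n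
  positivity

lemma qBraceFact_pos {q : ℝ} (hq : 0 < q) (hq1 : q ≠ 1) (n : ℕ) : 0 < qBraceFact q n :=
  Finset.prod_pos fun k _ => qBrace_pos hq hq1 k

lemma qBraceFact_succ (q : ℝ) (n : ℕ) :
    qBraceFact q (n + 1) = qBraceFact q n * qBrace q (n + 1) :=
  Finset.prod_range_succ _ _

lemma qBraceFact_mul {q : ℝ} (hq : 0 < q) (hq1 : q ≠ 1) (n : ℕ) :
    qBraceFact q n * ∏ j ∈ Finset.range n, (1 + q ^ j) = 2 ^ n * qFact q n := by
  induction n with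
  | zero => simp [qBraceFact, qFact]
  | succ n ih =>
    have h2 : (1 : ℝ) + q ^ n ≠ 0 := by positivity
    rw [qBraceFact_succ, prod_range_succ, qFact_succ, qBrace_succ hq hq1]
    calc qBraceFact q n * (2 * qInt q (n + 1) / (1 + q ^ n)) *
          ((∏ j ∈ Finset.range n, (1 + q ^ j)) * (1 + q ^ n))
        = 2 * qInt q (n + 1) / (1 + q ^ n) * (1 + q ^ n) *
            (qBraceFact q n * ∏ j ∈ Finset.range n, (1 + q ^ j)) := by ring
      _ = 2 * qInt q (n + 1) * (2 ^ n * qFact q n) := by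
          rw [div_mul_cancel₀ _ h2, ih]
      _ = 2 ^ (n + 1) * (qFact q n * qInt q (n + 1)) := by ring

/-- The Gauss binomial identity in factorial/fraction form. -/
lemma gauss {q : ℝ} (hq : 0 < q) : ∀ (n : ℕ) (x : ℝ),
    ∑ k ∈ Finset.range (n + 1),
        q ^ (∑ i ∈ Finset.range k, i) * x ^ k / (qFact q k * qFact q (n - k)) =
      (∏ j ∈ Finset.range n, (1 + q ^ j * x)) / qFact q n := by
  intro n
  induction n with
  | zero => intro x; simp [qFact]
  | succ n ih =>
    intro x
    have hI : qInt q (n + 1) ≠ 0 := (qInt_pos hq n).ne'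
    set I := qInt q (n + 1) with hIdef
    have hsplit : ∀ k ∈ Finset.range (n + 2),
        q ^ (∑ i ∈ Finset.range k, i) * x ^ k / (qFact q k * qFact q (n + 1 - k)) =
          q ^ (∑ i ∈ Finset.range k, i) * x ^ k * (q ^ k * qInt q (n + 1 - k)) /
              (qFact q k * qFact q (n + 1 - k) * I) +
            q ^ (∑ i ∈ Finset.range k, i) * x ^ k * qInt q k /
              (qFact q k * qFact q (n + 1 - k) * I) := by
      intro k hk
      have hk' : k ≤ n + 1 := by simp at hk; omega
      have hIk : I = qInt q k + q ^ k * qInt q (n + 1 - k) := by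
        have h := qInt_add q k (n + 1 - k)
        rw [show k + (n + 1 - k) = n + 1 by omega] at h
        rw [hIdef, h]
      have key : q ^ k * qInt q (n + 1 - k) + qInt q k = I := by rw [hIk]; ring
      rw [← add_div, ← mul_add, key, mul_div_mul_right _ _ hI]
    rw [Finset.sum_congr rfl hsplit, Finset.sum_add_distrib]
    have e1 : ∑ k ∈ Finset.range (n + 2),
        q ^ (∑ i ∈ Finset.range k, i) * x ^ k * (q ^ k * qInt q (n + 1 - k)) /
          (qFact q k * qFact q (n + 1 - k) * I) =
        (∑ k ∈ Finset.range (n + 1),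
          q ^ (∑ i ∈ Finset.range k, i) * (q * x) ^ k / (qFact q k * qFact q (n - k))) / I := by
      rw [Finset.sum_range_succ]
      have h0 : qInt q (n + 1 - (n + 1)) = 0 := by simp [qInt]
      rw [h0]
      rw [Finset.sum_div]
      simp only [mul_zero, zero_div, add_zero]
      refine Finset.sum_congr rfl fun k hk => ?_
      have hk' : k ≤ n := by simp at hk; omega
      have h1 : n + 1 - k = (n - k) + 1 := by omega
      have hJ : qInt q ((n - k) + 1) ≠ 0 := (qInt_pos hq (n - k)).ne'
      have hfk : qFact q k ≠ 0 := (qFact_pos hq k).ne'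
      have hfnk : qFact q (n - k) ≠ 0 := (qFact_pos hq (n - k)).ne'
      rw [h1, qFact_succ, mul_pow]
      field_simp
    have e2 : ∑ k ∈ Finset.range (n + 2),
        q ^ (∑ i ∈ Finset.range k, i) * x ^ k * qInt q k /
          (qFact q k * qFact q (n + 1 - k) * I) =
        x * (∑ k ∈ Finset.range (n + 1),
          q ^ (∑ i ∈ Finset.range k, i) * (q * x) ^ k / (qFact q k * qFact q (n - k))) / I := by
      rw [Finset.sum_range_succ']
      have h0 : qInt q 0 = 0 := by simp [qInt]
      rw [h0]
      rw [Finset.mul_sum, Finset.sum_div]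
      simp only [mul_zero, zero_div, add_zero, pow_zero, zero_mul, mul_one]
      refine Finset.sum_congr rfl fun k hk => ?_
      have hk' : k ≤ n := by simp at hk; omega
      have h1 : n + 1 - (k + 1) = n - k := by omega
      have hJ : qInt q (k + 1) ≠ 0 := (qInt_pos hq k).ne'
      have hfk : qFact q k ≠ 0 := (qFact_pos hq k).ne'
      have hfnk : qFact q (n - k) ≠ 0 := (qFact_pos hq (n - k)).ne'
      rw [h1, qFact_succ, mul_pow, Finset.sum_range_succ, pow_add, pow_succ]
      field_simp
    rw [e1, e2, ih (q * x)]
    have hfn : qFact q n ≠ 0 := (qFact_pos hq n).ne'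
    rw [qFact_succ]
    rw [← hIdef]
    rw [Finset.prod_range_succ']
    have hprod : ∏ j ∈ Finset.range n, (1 + q ^ j * (q * x)) =
        ∏ j ∈ Finset.range n, (1 + q ^ (j + 1) * x) := by
      refine Finset.prod_congr rfl fun j _ => ?_
      rw [pow_succ]; ring
    rw [hprod]
    simp only [pow_zero, one_mul]
    field_simp
    ring

lemma tendsto_qInt_lt {q : ℝ} (hq0 : 0 < q) (hql : q < 1) :
    Tendsto (fun n : ℕ => qInt q (n + 1)) atTop (𝓝 (1 / (1 - q))) := by
  have h1 : q - 1 ≠ 0 := by intro h; nlinarith [sub_eq_zero.mp h]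
  have h2 : (1 : ℝ) - q ≠ 0 := by intro h; nlinarith [sub_eq_zero.mp h]
  have heq : ∀ n : ℕ, qInt q (n + 1) = (q ^ (n + 1) - 1) / (q - 1) :=
    fun n => qInt_eq (by intro h; rw [h] at hql; exact lt_irrefl _ hql) _
  simp only [heq]
  have hpow : Tendsto (fun n : ℕ => q ^ (n + 1)) atTop (𝓝 0) :=
    (tendsto_pow_atTop_nhds_zero_of_lt_one hq0.le hql).comp (tendsto_add_atTop_nat 1)
  have := (hpow.sub_const 1).div_const (q - 1)
  convert this using 2
  rw [div_eq_div_iff h2 h1]; ring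

lemma tendsto_aux_lt {q : ℝ} (hq0 : 0 < q) (hql : q < 1) (a b : ℝ) :
    Tendsto (fun n : ℕ => (a + b * q ^ n) / qInt q (n + 1)) atTop (𝓝 (a * (1 - q))) := by
  have h2 : (0:ℝ) < 1 - q := by linarith
  have hnum : Tendsto (fun n : ℕ => a + b * q ^ n) atTop (𝓝 a) := by
    simpa using tendsto_const_nhds.add
      ((tendsto_pow_atTop_nhds_zero_of_lt_one hq0.le hql).const_mul b)
  have := hnum.div (tendsto_qInt_lt hq0 hql) (by positivity)
  convert this using 2
  · rfl
  rw [one_div, div_eq_mul_inv, inv_inv]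

lemma tendsto_aux_gt {q : ℝ} (hqg : 1 < q) (a b : ℝ) :
    Tendsto (fun n : ℕ => (a + b * q ^ n) / qInt q (n + 1)) atTop (𝓝 (b * (q - 1) / q)) := by
  have hq0 : 0 < q := lt_trans one_pos hqg
  have hq1 : q ≠ 1 := ne_of_gt hqg
  have hiq : q⁻¹ < 1 := inv_lt_one_of_one_lt₀ hqg
  have hiq0 : (0:ℝ) ≤ q⁻¹ := by positivity
  have heq : ∀ n : ℕ, (a + b * q ^ n) / qInt q (n + 1) =
      (a * (q⁻¹) ^ n + b) * (q - 1) / (q - (q⁻¹) ^ n) := by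
    intro n
    have hqn : (0:ℝ) < q ^ n := pow_pos hq0 n
    have hd : q ^ (n + 1) - 1 ≠ 0 := by
      have : (1:ℝ) < q ^ (n + 1) := one_lt_pow₀ hqg (Nat.succ_ne_zero n)
      linarith
    have hd2 : q - (q⁻¹) ^ n ≠ 0 := by
      have : (q⁻¹) ^ n ≤ 1 := pow_le_one₀ hiq0 hiq.le
      intro h; nlinarith [sub_eq_zero.mp h]
    rw [inv_pow] at hd2 ⊢
    rw [qInt_eq hq1, div_div_eq_mul_div, div_eq_div_iff hd hd2]
    field_simp
    rw [pow_succ]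
  simp only [heq]
  have hpow : Tendsto (fun n : ℕ => (q⁻¹) ^ n) atTop (𝓝 0) :=
    tendsto_pow_atTop_nhds_zero_of_lt_one hiq0 hiq
  have hnum : Tendsto (fun n : ℕ => (a * (q⁻¹) ^ n + b) * (q - 1)) atTop (𝓝 (b * (q - 1))) := by
    simpa using ((hpow.const_mul a).add_const b).mul_const (q - 1)
  have hden : Tendsto (fun n : ℕ => q - (q⁻¹) ^ n) atTop (𝓝 q) := by
    simpa using (tendsto_const_nhds (x := q)).sub hpow
  exact hnum.div hden (ne_of_gt hq0)

lemma summable_norm_of_ratio {f : ℕ → ℂ} {l : ℝ} (hl : l < 1) (hf : ∀ n, f n ≠ 0)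
    (h : Filter.Tendsto (fun n => ‖f (n + 1)‖ / ‖f n‖) atTop (𝓝 l)) :
    Summable fun n => ‖f n‖ := by
  apply summable_of_ratio_test_tendsto_lt_one hl
    (Eventually.of_forall fun n => norm_ne_zero_iff.mpr (hf n))
  simpa only [norm_norm] using h

lemma tri_succ (n : ℕ) : (n + 1) * n / 2 = n * (n - 1) / 2 + n := by
  have h1 := Finset.sum_range_id (n + 1)
  have h2 := Finset.sum_range_id n
  rw [Finset.sum_range_succ] at h1
  simp only [Nat.add_sub_cancel] at h1
  omega

lemma cauchy_term {q : ℝ} (hq : 0 < q) (hq1 : q ≠ 1) (z : ℂ) (n : ℕ) :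
    ∑ k ∈ Finset.range (n + 1),
        (z / 2) ^ k / (qFact q k : ℂ) *
          ((q : ℂ) ^ ((n - k) * ((n - k) - 1) / 2) * (z / 2) ^ (n - k) / (qFact q (n - k) : ℂ)) =
      z ^ n / (qBraceFact q n : ℂ) := by
  have key : ∑ k ∈ Finset.range (n + 1),
      q ^ ((n - k) * ((n - k) - 1) / 2) / (qFact q k * qFact q (n - k)) =
      (∏ j ∈ Finset.range n, (1 + q ^ j)) / qFact q n := by
    rw [← Finset.sum_range_reflect]
    have h := gauss hq n 1
    simp only [one_pow, mul_one] at h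
    rw [← h]
    refine Finset.sum_congr rfl fun j hj => ?_
    have hj' : j ≤ n := by simp at hj; omega
    rw [show n + 1 - 1 - j = n - j from by omega, show n - (n - j) = j from by omega,
      Finset.sum_range_id, mul_comm (qFact q (n - j)) (qFact q j)]
  have hcast : ((∏ j ∈ Finset.range n, (1 + q ^ j) : ℝ) : ℂ) =
      ∏ j ∈ Finset.range n, (1 + (q : ℂ) ^ j) := by push_cast; rfl
  have keyC : ∑ k ∈ Finset.range (n + 1),
      (q : ℂ) ^ ((n - k) * ((n - k) - 1) / 2) / ((qFact q k : ℂ) * (qFact q (n - k) : ℂ)) =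
      (∏ j ∈ Finset.range n, (1 + (q : ℂ) ^ j)) / (qFact q n : ℂ) := by
    have h := congrArg (fun r : ℝ => (r : ℂ)) key
    push_cast at h
    exact h
  have step1 : ∑ k ∈ Finset.range (n + 1),
      (z / 2) ^ k / (qFact q k : ℂ) *
        ((q : ℂ) ^ ((n - k) * ((n - k) - 1) / 2) * (z / 2) ^ (n - k) / (qFact q (n - k) : ℂ)) =
      (z / 2) ^ n * ∑ k ∈ Finset.range (n + 1),
        (q : ℂ) ^ ((n - k) * ((n - k) - 1) / 2) / ((qFact q k : ℂ) * (qFact q (n - k) : ℂ)) := by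
    rw [Finset.mul_sum]
    refine Finset.sum_congr rfl fun k hk => ?_
    have hk' : k ≤ n := by simp at hk; omega
    rw [show (z / 2) ^ n = (z / 2) ^ k * (z / 2) ^ (n - k) from by
      rw [← pow_add, Nat.add_sub_cancel' hk']]
    field_simp
  rw [step1, keyC]
  have hP : (0:ℝ) < ∏ j ∈ Finset.range n, (1 + q ^ j) :=
    Finset.prod_pos fun j _ => by positivity
  have hF : (0:ℝ) < qFact q n := qFact_pos hq n
  have hB : (0:ℝ) < qBraceFact q n := qBraceFact_pos hq hq1 n
  have hPc : (∏ j ∈ Finset.range n, (1 + (q : ℂ) ^ j)) ≠ 0 := by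
    rw [← hcast]; exact_mod_cast hP.ne'
  have hFc : ((qFact q n : ℝ) : ℂ) ≠ 0 := by exact_mod_cast hF.ne'
  have hBc : ((qBraceFact q n : ℝ) : ℂ) ≠ 0 := by exact_mod_cast hB.ne'
  have hBP : ((qBraceFact q n : ℝ) : ℂ) * (∏ j ∈ Finset.range n, (1 + (q : ℂ) ^ j)) =
      2 ^ n * ((qFact q n : ℝ) : ℂ) := by
    have h := congrArg (fun r : ℝ => (r : ℂ)) (qBraceFact_mul hq hq1 n)
    push_cast at h
    exact h
  have h2 : ((2 : ℂ)) ^ n ≠ 0 := pow_ne_zero n two_ne_zero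
  rw [div_pow]
  field_simp
  linear_combination z ^ n * hBP

/-- For `|z| < R_q`, the series defining `e_q(z/2)`, `E_q(z/2)` and `𝓔_q(z)` converge and
`e_q(z/2) · E_q(z/2) = ∑_{n=0}^∞ z^n/{n}_q!`. -/
theorem improved_qExp_eq_product_of_qExps (q : ℝ) (hq : 0 < q) (hq1 : q ≠ 1) (z : ℂ)
    (hz : ‖z‖ < Rq q) :
    Summable (fun n : ℕ => (z / 2) ^ n / (qFact q n : ℂ)) ∧
    Summable (fun n : ℕ => (q : ℂ) ^ (n * (n - 1) / 2) * (z / 2) ^ n / (qFact q n : ℂ)) ∧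
    Summable (fun n : ℕ => z ^ n / (qBraceFact q n : ℂ)) ∧
    (∑' n : ℕ, (z / 2) ^ n / (qFact q n : ℂ)) *
        (∑' n : ℕ, (q : ℂ) ^ (n * (n - 1) / 2) * (z / 2) ^ n / (qFact q n : ℂ)) =
      ∑' n : ℕ, z ^ n / (qBraceFact q n : ℂ) := by
  rcases eq_or_ne z 0 with rfl | hz0
  · have hA : Summable (fun n : ℕ => ((0:ℂ) / 2) ^ n / (qFact q n : ℂ)) := by
      apply summable_of_ne_finset_zero (s := {0})
      intro b hb
      simp only [Finset.mem_singleton] at hb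
      simp [zero_pow hb]
    have hB : Summable
        (fun n : ℕ => (q : ℂ) ^ (n * (n - 1) / 2) * ((0:ℂ) / 2) ^ n / (qFact q n : ℂ)) := by
      apply summable_of_ne_finset_zero (s := {0})
      intro b hb
      simp only [Finset.mem_singleton] at hb
      simp [zero_pow hb]
    have hC : Summable (fun n : ℕ => (0:ℂ) ^ n / (qBraceFact q n : ℂ)) := by
      apply summable_of_ne_finset_zero (s := {0})
      intro b hb
      simp only [Finset.mem_singleton] at hb
      simp [zero_pow hb]
    refine ⟨hA, hB, hC, ?_⟩
    have e1 : (∑' n : ℕ, ((0:ℂ) / 2) ^ n / (qFact q n : ℂ)) = 1 := by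
      rw [tsum_eq_single 0 (fun b hb => by simp [zero_pow hb])]
      simp [qFact]
    have e2 : (∑' n : ℕ, (q : ℂ) ^ (n * (n - 1) / 2) * ((0:ℂ) / 2) ^ n / (qFact q n : ℂ)) = 1 := by
      rw [tsum_eq_single 0 (fun b hb => by simp [zero_pow hb])]
      simp [qFact]
    have e3 : (∑' n : ℕ, (0:ℂ) ^ n / (qBraceFact q n : ℂ)) = 1 := by
      rw [tsum_eq_single 0 (fun b hb => by simp [zero_pow hb])]
      simp [qBraceFact]
    rw [e1, e2, e3, one_mul]
  · have hz0' : (0:ℝ) < ‖z‖ := norm_pos_iff.mpr hz0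
    set d : ℝ := ‖z‖ / 2 with hd
    set A := fun n : ℕ => (z / 2) ^ n / (qFact q n : ℂ) with hAdef
    set B := fun n : ℕ => (q : ℂ) ^ (n * (n - 1) / 2) * (z / 2) ^ n / (qFact q n : ℂ) with hBdef
    set C := fun n : ℕ => z ^ n / (qBraceFact q n : ℂ) with hCdef
    have hqc : (q:ℂ) ≠ 0 := by exact_mod_cast hq.ne'
    have hz2 : z / 2 ≠ 0 := div_ne_zero hz0 two_ne_zero
    have hFne : ∀ m, ((qFact q m : ℝ):ℂ) ≠ 0 := fun m => by
      exact_mod_cast (qFact_pos hq m).ne'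
    have hBrne : ∀ m, ((qBraceFact q m : ℝ):ℂ) ≠ 0 := fun m => by
      exact_mod_cast (qBraceFact_pos hq hq1 m).ne'
    have hA0 : ∀ n, A n ≠ 0 := fun n => div_ne_zero (pow_ne_zero n hz2) (hFne n)
    have hB0 : ∀ n, B n ≠ 0 := fun n =>
      div_ne_zero (mul_ne_zero (pow_ne_zero _ hqc) (pow_ne_zero n hz2)) (hFne n)
    have hC0 : ∀ n, C n ≠ 0 := fun n => div_ne_zero (pow_ne_zero n hz0) (hBrne n)
    have hnA : ∀ m, ‖A m‖ = d ^ m / qFact q m := by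
      intro m
      simp [hAdef, hd, norm_div, norm_pow, Real.norm_eq_abs, abs_of_pos (qFact_pos hq m)]
    have hnB : ∀ m, ‖B m‖ = q ^ (m * (m - 1) / 2) * d ^ m / qFact q m := by
      intro m
      simp [hBdef, hd, norm_div, norm_mul, norm_pow, Real.norm_eq_abs,
        abs_of_pos (qFact_pos hq m), abs_of_pos hq]
    have hnC : ∀ m, ‖C m‖ = ‖z‖ ^ m / qBraceFact q m := by
      intro m
      simp [hCdef, norm_div, norm_pow, Real.norm_eq_abs,
        abs_of_pos (qBraceFact_pos hq hq1 m)]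
    have hrA : (fun n => ‖A (n+1)‖ / ‖A n‖) =
        fun n : ℕ => (d + 0 * q ^ n) / qInt q (n + 1) := by
      funext n
      rw [hnA, hnA, qFact_succ, pow_succ]
      have h1 : qInt q (n+1) ≠ 0 := (qInt_pos hq n).ne'
      have h2 : qFact q n ≠ 0 := (qFact_pos hq n).ne'
      have h3 : d ^ n ≠ 0 := by rw [hd]; positivity
      field_simp
      ring
    have hrB : (fun n => ‖B (n+1)‖ / ‖B n‖) =
        fun n : ℕ => (0 + d * q ^ n) / qInt q (n + 1) := by
      funext n
      rw [hnB, hnB, qFact_succ]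
      simp only [Nat.add_sub_cancel]
      rw [tri_succ n, pow_add, pow_succ]
      have h1 : qInt q (n+1) ≠ 0 := (qInt_pos hq n).ne'
      have h2 : qFact q n ≠ 0 := (qFact_pos hq n).ne'
      have h3 : d ^ n ≠ 0 := by rw [hd]; positivity
      have h4 : q ^ (n * (n-1) / 2) ≠ 0 := (pow_pos hq _).ne'
      field_simp
      ring
    have hrC : (fun n => ‖C (n+1)‖ / ‖C n‖) =
        fun n : ℕ => (d + d * q ^ n) / qInt q (n + 1) := by
      funext n
      rw [hnC, hnC, qBraceFact_succ, qBrace_succ hq hq1]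
      have hz2d : ‖z‖ = 2 * d := by rw [hd]; ring
      rw [hz2d]
      have h1 : qInt q (n+1) ≠ 0 := (qInt_pos hq n).ne'
      have h2 : qBraceFact q n ≠ 0 := (qBraceFact_pos hq hq1 n).ne'
      have h3 : (2 * d) ^ n ≠ 0 := by rw [hd]; positivity
      have h4 : (1:ℝ) + q ^ n ≠ 0 := by positivity
      rw [pow_succ]
      field_simp
    have mainA : Summable (fun n => ‖A n‖) := by
      rcases lt_or_gt_of_ne hq1 with h | h
      · refine summable_norm_of_ratio ?_ hA0 (by rw [hrA]; exact tendsto_aux_lt hq h _ 0)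
        have hR : Rq q = 2 / (1 - q) := if_pos h
        have h1 : (0:ℝ) < 1 - q := by linarith
        rw [hR, lt_div_iff₀ h1] at hz
        rw [hd]
        nlinarith
      · refine summable_norm_of_ratio ?_ hA0 (by rw [hrA]; exact tendsto_aux_gt h _ 0)
        rw [zero_mul, zero_div]
        norm_num
    have mainB : Summable (fun n => ‖B n‖) := by
      rcases lt_or_gt_of_ne hq1 with h | h
      · refine summable_norm_of_ratio ?_ hB0 (by rw [hrB]; exact tendsto_aux_lt hq h 0 _)
        rw [zero_mul]
        norm_num
      · refine summable_norm_of_ratio ?_ hB0 (by rw [hrB]; exact tendsto_aux_gt h 0 _)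
        have hR : Rq q = 2 * q / (q - 1) := if_neg (not_lt.mpr h.le)
        have h1 : (0:ℝ) < q - 1 := by linarith
        rw [hR, lt_div_iff₀ h1] at hz
        rw [hd, div_lt_one hq]
        nlinarith
    have mainC : Summable (fun n => ‖C n‖) := by
      rcases lt_or_gt_of_ne hq1 with h | h
      · refine summable_norm_of_ratio ?_ hC0 (by rw [hrC]; exact tendsto_aux_lt hq h _ _)
        have hR : Rq q = 2 / (1 - q) := if_pos h
        have h1 : (0:ℝ) < 1 - q := by linarith
        rw [hR, lt_div_iff₀ h1] at hz
        rw [hd]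
        nlinarith
      · refine summable_norm_of_ratio ?_ hC0 (by rw [hrC]; exact tendsto_aux_gt h _ _)
        have hR : Rq q = 2 * q / (q - 1) := if_neg (not_lt.mpr h.le)
        have h1 : (0:ℝ) < q - 1 := by linarith
        rw [hR, lt_div_iff₀ h1] at hz
        rw [hd, div_lt_one hq]
        nlinarith
    refine ⟨mainA.of_norm, mainB.of_norm, mainC.of_norm, ?_⟩
    rw [tsum_mul_tsum_eq_tsum_sum_antidiagonal_of_summable_norm mainA mainB]
    refine tsum_congr fun n => ?_
    rw [Finset.Nat.sum_antidiagonal_eq_sum_range_succ_mk]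
    exact cauchy_term hq hq1 z n
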